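/- Let r > 0, n ≥ 2 an integer, d ≥ 1, and t ∈ (0,1)^d. Let J_n = {j ∈ ℤ^d : j ∈ (-n,n]^d}. Then ∑_{j ∉ J_n} sinc²(t-j) e^{-‖t-j‖²/r²} ≤ (d/π²) · r² e^{-(n-1)²/r²} / (n²(n-1)), where sinc(x) = ∏_{k=1}^d sin(π x_k)/(π x_k) and ‖·‖ is the Euclidean norm on ℝ^d. -/

import Mathlib

open Real

noncomputable def sinc (y : ℝ) : ℝ :=
  if y = 0 then 1 else Real.sin (π * y) / (π * y)

noncomputable def sincd {d : ℕ} (x : Fin d → ℝ) : ℝ := ∏ k, _root_.sinc (x k)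

open scoped ENNReal

lemma csc_step (a : ℝ) (hs : Real.sin a ≠ 0) (hc : Real.cos a ≠ 0) :
    1 / Real.sin (2*a) ^ 2 = 1/4 * (1 / Real.sin a ^ 2 + 1 / Real.cos a ^ 2) := by
  have h := Real.sin_sq_add_cos_sq a
  rw [Real.sin_two_mul]
  field_simp
  nlinarith [sq_nonneg (Real.sin a), sq_nonneg (Real.cos a)]

lemma bisect (x : ℝ) (hx0 : 0 < x) (hx1 : x < 1) (m : ℕ) :
    ∑ k ∈ Finset.range (2^m), 1 / Real.sin (π*(x+k)/2^m) ^ 2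
      = 4^m / Real.sin (π*x) ^ 2 := by
  induction m with
  | zero => simp
  | succ m ih =>
    have h2m : (0:ℝ) < 2^m := by positivity
    have key : ∀ k ∈ Finset.range (2^m),
        1 / Real.sin (π*(x+k)/2^(m+1)) ^ 2 + 1 / Real.sin (π*(x+(k+2^m : ℕ))/2^(m+1)) ^ 2
          = 4 * (1 / Real.sin (π*(x+k)/2^m) ^ 2) := by
      intro k hk
      simp only [Finset.mem_range] at hk
      set a := π*(x+k)/2^(m+1) with ha
      have hklt : (k:ℝ) ≤ 2^m - 1 := by
        have : (k:ℝ) + 1 ≤ 2^m := by exact_mod_cast hk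
        linarith
      have ha0 : 0 < a := by
        apply div_pos (by positivity) (by positivity)
      have hapi : a < π/2 := by
        rw [ha, div_lt_iff₀ (by positivity), pow_succ]
        have hxk : x + k < 2^m := by linarith
        calc π*(x+k) < π * 2^m := by
              apply mul_lt_mul_of_pos_left hxk Real.pi_pos
          _ = π/2 * (2^m*2) := by ring
      have hs : (0:ℝ) < Real.sin a := Real.sin_pos_of_pos_of_lt_pi ha0 (by linarith [Real.pi_pos])
      have hc : (0:ℝ) < Real.cos a := Real.cos_pos_of_mem_Ioo ⟨by linarith [Real.pi_pos], hapi⟩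
      have h2a : π*(x+k)/2^m = 2*a := by
        rw [ha]; field_simp; ring
      have hshift : π*(x+(k+2^m : ℕ))/2^(m+1) = a + π/2 := by
        push_cast
        rw [ha]; field_simp; ring
      rw [h2a, hshift, Real.sin_add_pi_div_two, csc_step a hs.ne' hc.ne']
      ring
    have split : ∑ k ∈ Finset.range (2^(m+1)), 1 / Real.sin (π*(x+k)/2^(m+1)) ^ 2
        = ∑ k ∈ Finset.range (2^m), (1 / Real.sin (π*(x+k)/2^(m+1)) ^ 2
            + 1 / Real.sin (π*(x+(k+2^m : ℕ))/2^(m+1)) ^ 2) := by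
      rw [Finset.sum_add_distrib]
      have h1 : Finset.range (2^(m+1)) = Finset.Ico 0 (2^(m+1)) := by
        rw [Finset.range_eq_Ico]
      rw [h1, ← Finset.sum_Ico_consecutive _ (Nat.zero_le (2^m)) (by rw [pow_succ]; omega),
        ← Finset.range_eq_Ico, Finset.sum_Ico_eq_sum_range]
      have hsub : 2^(m+1) - 2^m = 2^m := by rw [pow_succ]; omega
      rw [hsub]
      congr 1
      apply Finset.sum_congr rfl
      intro k _
      congr 3
      push_cast
      ring
    rw [split, Finset.sum_congr rfl key, ← Finset.mul_sum, ih]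
    ring

lemma icc_bound (x : ℝ) (hx0 : 0 < x) (hx1 : x < 1) (K : ℕ) :
    ∑ j ∈ Finset.Icc (-(K:ℤ)) K, 1 / (x - j) ^ 2 ≤ π^2 / Real.sin (π*x) ^ 2 := by
  set m := K + 2 with hm
  set N := 2^m with hN
  have hKN : 2*K + 2 ≤ N := by
    have h1 : K < 2^K := Nat.lt_two_pow_self
    have : N = 4 * 2^K := by rw [hN, hm]; ring
    omega
  have hNR : (0:ℝ) < N := by positivity
  set e : ℤ → ℕ := fun j => if j ≤ 0 then (-j).toNat else N - j.toNat with he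
  set h : ℕ → ℝ := fun k => 1 / Real.sin (π*(x+k)/N) ^ 2 with hh
  have hmem : ∀ j ∈ Finset.Icc (-(K:ℤ)) K, e j < N := by
    intro j hj
    simp only [Finset.mem_Icc] at hj
    simp only [he]
    split_ifs <;> omega
  have hgen : ∀ y : ℝ, 0 < y → y ≤ (N:ℝ) - 1 →
      0 < Real.sin (π * y / N) ∧ (N:ℝ)^2 * Real.sin (π * y / N) ^ 2 ≤ π^2 * y^2 := by
    intro y hy0 hy1
    have harg0 : 0 < π * y / N := by positivity
    have harg1 : π * y / N < π := by
      rw [div_lt_iff₀ hNR]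
      have : y < (N:ℝ) := by linarith
      nlinarith [Real.pi_pos]
    have hs : 0 < Real.sin (π*y/N) := Real.sin_pos_of_pos_of_lt_pi harg0 harg1
    refine ⟨hs, ?_⟩
    have hle : Real.sin (π*y/N) ≤ π*y/N := Real.sin_le harg0.le
    have h3 : Real.sin (π*y/N) * N ≤ π*y := (le_div_iff₀ hNR).mp hle
    nlinarith [mul_pos hs hNR]
  have key : ∀ j ∈ Finset.Icc (-(K:ℤ)) K, 1 / (x - j) ^ 2 ≤ π^2 / (N:ℝ)^2 * h (e j) := by
    intro j hj
    simp only [Finset.mem_Icc] at hj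
    by_cases hj0 : j ≤ 0
    · have hcast : ((e j : ℕ) : ℝ) = -j := by
        simp only [he, if_pos hj0]
        have h2 : (((-j).toNat : ℕ) : ℤ) = -j := Int.toNat_of_nonneg (by omega)
        exact_mod_cast h2
      have hy0 : (0:ℝ) < x - j := by
        have : (j:ℝ) ≤ 0 := by exact_mod_cast hj0
        linarith
      have hy1 : x - j ≤ (N:ℝ) - 1 := by
        have : (-j : ℝ) ≤ K := by exact_mod_cast (by omega : -j ≤ (K:ℤ))
        have hKN' : (2*(K:ℝ) + 2 : ℝ) ≤ N := by exact_mod_cast hKN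
        linarith
      obtain ⟨hs, hsq⟩ := hgen (x - j) hy0 hy1
      simp only [hh, hcast]
      have harg : x + -(j:ℝ) = x - j := by ring
      rw [harg, div_mul_div_comm, mul_one, div_le_div_iff₀ (by positivity) (by positivity)]
      nlinarith [hsq]
    · push_neg at hj0
      have hcast : ((e j : ℕ) : ℝ) = (N:ℝ) - j := by
        simp only [he, if_neg (by omega : ¬ j ≤ 0)]
        have h2 : (((N - j.toNat : ℕ) : ℕ) : ℤ) = N - j := by omega
        exact_mod_cast h2
      have hjx : (1:ℝ) ≤ j := by exact_mod_cast hj0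
      have hy0 : (0:ℝ) < j - x := by linarith
      have hy1 : (j:ℝ) - x ≤ (N:ℝ) - 1 := by
        have : (j : ℝ) ≤ K := by exact_mod_cast hj.2
        have hKN' : (2*(K:ℝ) + 2 : ℝ) ≤ N := by exact_mod_cast hKN
        linarith
      obtain ⟨hs, hsq⟩ := hgen ((j:ℝ) - x) hy0 hy1
      simp only [hh, hcast]
      have harg : π * (x + ((N:ℝ) - j)) / N = π + -(π*((j:ℝ)-x)/N) := by
        field_simp; ring
      have hsin : Real.sin (π * (x + ((N:ℝ) - j)) / N) ^ 2
          = Real.sin (π*((j:ℝ)-x)/N) ^ 2 := by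
        rw [harg, Real.sin_add, Real.sin_pi, Real.cos_pi, Real.sin_neg]
        ring
      rw [hsin, div_mul_div_comm, mul_one,
        div_le_div_iff₀ (by nlinarith [hy0] : (0:ℝ) < (x - (j:ℝ))^2) (by positivity)]
      nlinarith [hsq]
  have hinj : ∀ a ∈ Finset.Icc (-(K:ℤ)) K, ∀ b ∈ Finset.Icc (-(K:ℤ)) K, e a = e b → a = b := by
    intro a ha b hb
    simp only [Finset.mem_Icc] at ha hb
    simp only [he]
    split_ifs <;> omega
  have hnonneg : ∀ k, 0 ≤ h k := by
    intro k; simp only [hh]; positivity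
  calc ∑ j ∈ Finset.Icc (-(K:ℤ)) K, 1 / (x - j) ^ 2
      ≤ ∑ j ∈ Finset.Icc (-(K:ℤ)) K, π^2 / (N:ℝ)^2 * h (e j) := Finset.sum_le_sum key
    _ = π^2 / (N:ℝ)^2 * ∑ j ∈ Finset.Icc (-(K:ℤ)) K, h (e j) := by rw [Finset.mul_sum]
    _ = π^2 / (N:ℝ)^2 * ∑ k ∈ (Finset.Icc (-(K:ℤ)) K).image e, h k := by
        rw [Finset.sum_image hinj]
    _ ≤ π^2 / (N:ℝ)^2 * ∑ k ∈ Finset.range N, h k := by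
        apply mul_le_mul_of_nonneg_left _ (by positivity)
        apply Finset.sum_le_sum_of_subset_of_nonneg
        · intro k hk
          simp only [Finset.mem_image] at hk
          obtain ⟨j, hj, rfl⟩ := hk
          exact Finset.mem_range.mpr (hmem j hj)
        · intro k _ _; exact hnonneg k
    _ = π^2 / Real.sin (π*x) ^ 2 := by
        have hb := bisect x hx0 hx1 m
        have hcast : ∀ k : ℕ, h k = 1 / Real.sin (π*(x+k)/2^m) ^ 2 := by
          intro k; simp only [hh, hN]; push_cast; ring_nf
        rw [Finset.sum_congr rfl (fun k _ => hcast k)]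
        have hNcast : ((N:ℕ):ℝ) = 2^m := by rw [hN]; push_cast; ring
        rw [hNcast, hN, hb]
        have h4 : ((2:ℝ)^m)^2 = 4^m := by rw [← pow_mul, mul_comm, pow_mul]; norm_num
        rw [h4]
        have hsin : Real.sin (π*x) ≠ 0 := by
          have := Real.sin_pos_of_pos_of_lt_pi (by positivity : 0 < π*x)
            (by nlinarith [Real.pi_pos] : π*x < π)
          linarith
        field_simp

lemma sub_int_ne (x : ℝ) (hx0 : 0 < x) (hx1 : x < 1) (j : ℤ) : x - j ≠ 0 := by
  intro h
  have hxj : x = (j:ℝ) := by linarith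
  rw [hxj] at hx0 hx1
  have h0 : (0:ℤ) < j := by exact_mod_cast hx0
  have h1 : j < 1 := by exact_mod_cast hx1
  omega

lemma sinc_sq_int (x : ℝ) (hx0 : 0 < x) (hx1 : x < 1) (j : ℤ) :
    _root_.sinc (x - j) ^ 2 = Real.sin (π*x)^2 / π^2 * (1 / (x - j)^2) := by
  have hne := sub_int_ne x hx0 hx1 j
  rw [_root_.sinc, if_neg hne]
  have hsin : Real.sin (π * (x - j)) ^ 2 = Real.sin (π*x) ^ 2 := by
    have : π * (x - j) = π * x + -(j * π) := by ring
    rw [this, Real.sin_add, Real.sin_neg, Real.cos_neg, Real.sin_int_mul_pi]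
    have hc : Real.cos ((j:ℝ) * π) ^ 2 = 1 := by
      have := Real.sin_sq_add_cos_sq ((j:ℝ) * π)
      rw [Real.sin_int_mul_pi] at this
      nlinarith
    nlinarith
  rw [div_pow, hsin, mul_pow, div_mul_div_comm, mul_one]

lemma sinc_finset_sum_le (x : ℝ) (hx0 : 0 < x) (hx1 : x < 1) (s : Finset ℤ) :
    ∑ j ∈ s, _root_.sinc (x - j) ^ 2 ≤ 1 := by
  set K := s.sup (fun j => j.natAbs) with hK
  have hsub : s ⊆ Finset.Icc (-(K:ℤ)) K := by
    intro j hj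
    have h2 : j.natAbs ≤ K := by simpa using Finset.le_sup (f := fun j : ℤ => j.natAbs) hj
    simp only [Finset.mem_Icc]
    omega
  have hsin : (0:ℝ) < Real.sin (π*x) := Real.sin_pos_of_pos_of_lt_pi (by positivity)
    (by nlinarith [Real.pi_pos])
  calc ∑ j ∈ s, _root_.sinc (x - j) ^ 2
      ≤ ∑ j ∈ Finset.Icc (-(K:ℤ)) K, _root_.sinc (x - j) ^ 2 :=
        Finset.sum_le_sum_of_subset_of_nonneg hsub (fun j _ _ => sq_nonneg _)
    _ = Real.sin (π*x)^2 / π^2 * ∑ j ∈ Finset.Icc (-(K:ℤ)) K, 1 / (x - j)^2 := by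
        rw [Finset.mul_sum]
        exact Finset.sum_congr rfl (fun j _ => sinc_sq_int x hx0 hx1 j)
    _ ≤ Real.sin (π*x)^2 / π^2 * (π^2 / Real.sin (π*x) ^ 2) := by
        apply mul_le_mul_of_nonneg_left (icc_bound x hx0 hx1 K) (by positivity)
    _ = 1 := by
        field_simp

-- ENNReal: full one-dimensional sum is at most 1
lemma full_sum_le_one (r : ℝ) (x : ℝ) (hx0 : 0 < x) (hx1 : x < 1) :
    ∑' j : ℤ, ENNReal.ofReal (_root_.sinc (x - j) ^ 2 * Real.exp (-(x - j)^2 / r^2)) ≤ 1 := by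
  have hle : ∀ j : ℤ, ENNReal.ofReal (_root_.sinc (x - j) ^ 2 * Real.exp (-(x - j)^2 / r^2))
      ≤ ENNReal.ofReal (_root_.sinc (x - j) ^ 2) := by
    intro j
    apply ENNReal.ofReal_le_ofReal
    have hexp : Real.exp (-(x - j)^2 / r^2) ≤ 1 := by
      rw [Real.exp_le_one_iff]
      exact div_nonpos_of_nonpos_of_nonneg (neg_nonpos.mpr (sq_nonneg _)) (sq_nonneg r)
    nlinarith [sq_nonneg (_root_.sinc (x - j)), Real.exp_pos (-(x - j)^2 / r^2)]
  refine le_trans (ENNReal.tsum_le_tsum hle) ?_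
  rw [ENNReal.tsum_eq_iSup_sum]
  apply iSup_le
  intro s
  rw [← ENNReal.ofReal_sum_of_nonneg (fun j _ => sq_nonneg _)]
  calc ENNReal.ofReal (∑ j ∈ s, _root_.sinc (x - j) ^ 2)
      ≤ ENNReal.ofReal 1 := ENNReal.ofReal_le_ofReal (sinc_finset_sum_le x hx0 hx1 s)
    _ = 1 := ENNReal.ofReal_one

lemma sinc_sq_le (x : ℝ) (hne : x ≠ 0) : _root_.sinc x ^ 2 ≤ 1 / (π^2 * x^2) := by
  rw [_root_.sinc, if_neg hne, div_pow, mul_pow]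
  have h1 : Real.sin (π*x)^2 ≤ 1 := by
    nlinarith [Real.neg_one_le_sin (π*x), Real.sin_le_one (π*x)]
  have hx2 : (0:ℝ) < x^2 := lt_of_le_of_ne (sq_nonneg x) (Ne.symm (pow_ne_zero 2 hne))
  have h2 : (0:ℝ) < π^2 * x^2 := by
    have := Real.pi_pos
    positivity
  rw [div_le_div_iff₀ h2 h2]
  nlinarith

-- real term bound
lemma real_term_le (r : ℝ) (hr : 0 < r) (n : ℤ) (hn : 2 ≤ n) (x : ℝ)
    (hx0 : 0 < x) (hx1 : x < 1) (v : ℤ) (m : ℕ)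
    (hv : ((n:ℝ) + m) ≤ |x - v|) :
    _root_.sinc (x - v) ^ 2 * Real.exp (-(x - v)^2 / r^2)
      ≤ (1/(π^2 * (n:ℝ)^2) * Real.exp (-((n:ℝ)-1)^2/r^2))
          * Real.exp (-(2*(n:ℝ)-1)/r^2) ^ (m+1) := by
  have hnR : (2:ℝ) ≤ n := by exact_mod_cast hn
  have hnm : (0:ℝ) < (n:ℝ) + m := by positivity
  have hy2 : ((n:ℝ) + m)^2 ≤ (x - v)^2 := by
    have := sq_abs (x - (v:ℝ))
    nlinarith [abs_nonneg (x - (v:ℝ))]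
  have hne : x - (v:ℝ) ≠ 0 := sub_int_ne x hx0 hx1 v
  have hsinc : _root_.sinc (x - v) ^ 2 ≤ 1/(π^2 * (n:ℝ)^2) := by
    refine (sinc_sq_le _ hne).trans ?_
    have hx2 : (0:ℝ) < (x - v)^2 := lt_of_le_of_ne (sq_nonneg _) (Ne.symm (pow_ne_zero 2 hne))
    have hpi := Real.pi_pos
    have hm0 : (0:ℝ) ≤ m := Nat.cast_nonneg m
    rw [div_le_div_iff₀ (by positivity) (by positivity)]
    nlinarith [hy2, mul_nonneg hm0 (by linarith : (0:ℝ) ≤ 2*(n:ℝ)+m), sq_nonneg π]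
  have hexp : Real.exp (-(x - v)^2 / r^2)
      ≤ Real.exp (-((n:ℝ)-1)^2/r^2) * Real.exp (-(2*(n:ℝ)-1)/r^2) ^ (m+1) := by
    rw [← Real.exp_nat_mul, ← Real.exp_add]
    apply Real.exp_le_exp.mpr
    have hr2 : (0:ℝ) < r^2 := by positivity
    have hm0 : (0:ℝ) ≤ m := Nat.cast_nonneg m
    have key : ((n:ℝ)-1)^2 + ((m:ℝ)+1)*(2*(n:ℝ)-1) ≤ (x - v)^2 := by
      nlinarith [hy2, mul_nonneg hm0 (by linarith : (0:ℝ) ≤ 2*(n:ℝ)+m)]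
    have hrhs : -((n:ℝ)-1)^2/r^2 + ((m:ℕ)+1 : ℕ) * (-(2*(n:ℝ)-1)/r^2)
        = -(((n:ℝ)-1)^2 + ((m:ℝ)+1)*(2*(n:ℝ)-1))/r^2 := by
      push_cast
      ring
    rw [hrhs, div_le_div_iff₀ hr2 hr2]
    nlinarith [key, hr2]
  calc _root_.sinc (x - v) ^ 2 * Real.exp (-(x - v)^2 / r^2)
      ≤ (1/(π^2 * (n:ℝ)^2)) * (Real.exp (-((n:ℝ)-1)^2/r^2) * Real.exp (-(2*(n:ℝ)-1)/r^2) ^ (m+1)) := by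
        apply mul_le_mul hsinc hexp (Real.exp_pos _).le (by positivity)
    _ = _ := by ring

lemma tail_sum_le (r : ℝ) (hr : 0 < r) (n : ℤ) (hn : 2 ≤ n) (x : ℝ)
    (hx0 : 0 < x) (hx1 : x < 1) :
    ∑' v : ℤ, (Set.Ioc (-n) n)ᶜ.indicator
        (fun v : ℤ => ENNReal.ofReal (_root_.sinc (x - v) ^ 2 * Real.exp (-(x - v)^2 / r^2))) v
      ≤ ENNReal.ofReal (r^2 * Real.exp (-((n:ℝ)-1)^2/r^2) / (π^2 * (n:ℝ)^2 * ((n:ℝ)-1))) := by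
  have hnR : (2:ℝ) ≤ n := by exact_mod_cast hn
  have hpi := Real.pi_pos
  set G : ℤ → ℝ≥0∞ :=
    fun v : ℤ => ENNReal.ofReal (_root_.sinc (x - v) ^ 2 * Real.exp (-(x - v)^2 / r^2)) with hG
  set H : ℤ → ℝ≥0∞ := (Set.Ioc (-n) n)ᶜ.indicator G with hH
  set p : ℝ := Real.exp (-(2*(n:ℝ)-1)/r^2) with hp
  set C : ℝ := 1/(π^2 * (n:ℝ)^2) * Real.exp (-((n:ℝ)-1)^2/r^2) with hC
  have hp0 : 0 < p := Real.exp_pos _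
  have hp1 : p < 1 := by
    rw [hp, Real.exp_lt_one_iff]
    have : (0:ℝ) < 2*(n:ℝ)-1 := by linarith
    have hr2 : (0:ℝ) < r^2 := by positivity
    exact div_neg_of_neg_of_pos (by linarith) hr2
  have hC0 : 0 < C := by
    rw [hC]
    have hn0 : (0:ℝ) < (n:ℝ) := by linarith
    positivity
  set φp : ℕ → ℤ := fun m => n + 1 + m with hφp
  set φm : ℕ → ℤ := fun m => -n - m with hφm
  have hpmem : ∀ v : ℤ, v ∈ Set.range φp ↔ n + 1 ≤ v := by
    intro v
    constructor
    · rintro ⟨m, rfl⟩; simp only [hφp]; omega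
    · intro h; exact ⟨(v - n - 1).toNat, by simp only [hφp]; omega⟩
  have hmmem : ∀ v : ℤ, v ∈ Set.range φm ↔ v ≤ -n := by
    intro v
    constructor
    · rintro ⟨m, rfl⟩; simp only [hφm]; omega
    · intro h; exact ⟨(-n - v).toNat, by simp only [hφm]; omega⟩
  have hsplit : ∀ v : ℤ, H v ≤ (Set.range φp).indicator H v + (Set.range φm).indicator H v := by
    intro v
    by_cases h1 : v ∈ Set.range φp
    · rw [Set.indicator_of_mem h1]; exact le_self_add
    by_cases h2 : v ∈ Set.range φm
    · rw [Set.indicator_of_mem h2]; exact le_add_self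
    have hv : v ∈ Set.Ioc (-n) n := by
      rw [hpmem] at h1; rw [hmmem] at h2
      constructor <;> omega
    have : H v = 0 := by
      rw [hH, Set.indicator_of_notMem]
      simpa using hv
    rw [this]
    exact zero_le
  have hinjp : Function.Injective φp := by
    intro a b hab
    simp only [hφp] at hab
    omega
  have hinjm : Function.Injective φm := by
    intro a b hab
    simp only [hφm] at hab
    omega
  -- geometric sum bound
  have hgeo : ∑' m : ℕ, ENNReal.ofReal (C * p^(m+1)) = ENNReal.ofReal (C * (p * (1-p)⁻¹)) := by
    have hsumm : Summable (fun m : ℕ => C * p^(m+1)) := by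
      have := (summable_geometric_of_lt_one hp0.le hp1).mul_left (C * p)
      apply this.congr
      intro m
      ring
    rw [← ENNReal.ofReal_tsum_of_nonneg (fun m => by positivity) hsumm]
    congr 1
    have : ∀ m : ℕ, C * p^(m+1) = (C * p) * p^m := fun m => by ring
    rw [tsum_congr this, tsum_mul_left, tsum_geometric_of_lt_one hp0.le hp1]
    ring
  have hbound : ∀ (φ : ℕ → ℤ), (∀ m : ℕ, ((n:ℝ) + m) ≤ |x - φ m|) →
      (∀ m : ℕ, φ m ∉ Set.Ioc (-n) n) →
      ∑' m : ℕ, H (φ m) ≤ ENNReal.ofReal (C * (p * (1-p)⁻¹)) := by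
    intro φ habs hnotin
    rw [← hgeo]
    apply ENNReal.tsum_le_tsum
    intro m
    have : H (φ m) = G (φ m) := by
      rw [hH, Set.indicator_of_mem]
      simpa using hnotin m
    rw [this, hG]
    exact ENNReal.ofReal_le_ofReal (real_term_le r hr n hn x hx0 hx1 (φ m) m (habs m))
  have habsp : ∀ m : ℕ, ((n:ℝ) + m) ≤ |x - φp m| := by
    intro m
    have hc : ((φp m : ℤ) : ℝ) = (n:ℝ) + 1 + m := by simp only [hφp]; push_cast; ring
    rw [abs_sub_comm, abs_of_nonneg (by rw [hc]; push_cast; linarith [Nat.cast_nonneg (α := ℝ) m])]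
    rw [hc]
    linarith
  have habsm : ∀ m : ℕ, ((n:ℝ) + m) ≤ |x - φm m| := by
    intro m
    have hc : ((φm m : ℤ) : ℝ) = -(n:ℝ) - m := by simp only [hφm]; push_cast; ring
    rw [abs_of_nonneg (by rw [hc]; push_cast; linarith [Nat.cast_nonneg (α := ℝ) m])]
    rw [hc]
    linarith
  have hnotinp : ∀ m : ℕ, φp m ∉ Set.Ioc (-n) n := by
    intro m
    simp only [hφp, Set.mem_Ioc, not_and_or, not_le]
    omega
  have hnotinm : ∀ m : ℕ, φm m ∉ Set.Ioc (-n) n := by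
    intro m
    simp only [hφm, Set.mem_Ioc, not_and_or, not_lt]
    omega
  have hsum1 : ∑' v : ℤ, (Set.range φp).indicator H v ≤ ENNReal.ofReal (C * (p * (1-p)⁻¹)) := by
    rw [← hinjp.tsum_eq (f := (Set.range φp).indicator H)
      (Set.Subset.trans Set.support_indicator_subset le_rfl)]
    calc ∑' m : ℕ, (Set.range φp).indicator H (φp m)
        = ∑' m : ℕ, H (φp m) := by
          apply tsum_congr
          intro m
          rw [Set.indicator_of_mem (Set.mem_range_self m)]
      _ ≤ _ := hbound φp habsp hnotinp
  have hsum2 : ∑' v : ℤ, (Set.range φm).indicator H v ≤ ENNReal.ofReal (C * (p * (1-p)⁻¹)) := by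
    rw [← hinjm.tsum_eq (f := (Set.range φm).indicator H)
      (Set.Subset.trans Set.support_indicator_subset le_rfl)]
    calc ∑' m : ℕ, (Set.range φm).indicator H (φm m)
        = ∑' m : ℕ, H (φm m) := by
          apply tsum_congr
          intro m
          rw [Set.indicator_of_mem (Set.mem_range_self m)]
      _ ≤ _ := hbound φm habsm hnotinm
  have h1p : (0:ℝ) < 1 - p := by linarith
  -- final arithmetic
  have hfinal : C * (p * (1-p)⁻¹) + C * (p * (1-p)⁻¹)
      ≤ r^2 * Real.exp (-((n:ℝ)-1)^2/r^2) / (π^2 * (n:ℝ)^2 * ((n:ℝ)-1)) := by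
    have h1p : (0:ℝ) < 1 - p := by linarith
    have hu : (2*(n:ℝ)-1)/r^2 + 1 ≤ Real.exp ((2*(n:ℝ)-1)/r^2) := Real.add_one_le_exp _
    have hpe : p * Real.exp ((2*(n:ℝ)-1)/r^2) = 1 := by
      rw [hp, ← Real.exp_add]
      rw [show (-(2 * (n:ℝ) - 1) / r ^ 2 + (2 * (n:ℝ) - 1) / r ^ 2) = 0 by ring]
      exact Real.exp_zero
    have hr2 : (0:ℝ) < r^2 := by positivity
    -- p * (2n-1)/r^2 ≤ 1 - p
    have hkey : p * ((2*(n:ℝ)-1)/r^2) ≤ 1 - p := by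
      nlinarith [hp0]
    -- so p/(1-p) ≤ r^2/(2n-1)
    have hq : p * (1-p)⁻¹ ≤ r^2 / (2*(n:ℝ)-1) := by
      rw [mul_inv_le_iff₀ h1p, div_mul_eq_mul_div, le_div_iff₀ (by linarith : (0:ℝ) < 2*(n:ℝ)-1)]
      have hmul := mul_le_mul_of_nonneg_left hkey hr2.le
      have hid : r^2*(p*((2*(n:ℝ)-1)/r^2)) = p*(2*(n:ℝ)-1) := by field_simp
      nlinarith [hmul, hid]
    have hn0 : (0:ℝ) < (n:ℝ) := by linarith
    have hE := Real.exp_pos (-((n:ℝ)-1)^2/r^2)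
    have htarget : r^2 * Real.exp (-((n:ℝ)-1)^2/r^2) / (π^2 * (n:ℝ)^2 * ((n:ℝ)-1))
        = C * (r^2 / ((n:ℝ)-1)) := by
      rw [hC]
      field_simp
    rw [htarget]
    have h2q : p * (1-p)⁻¹ + p * (1-p)⁻¹ ≤ r^2 / ((n:ℝ)-1) := by
      have : r^2 / (2*(n:ℝ)-1) + r^2 / (2*(n:ℝ)-1) ≤ r^2 / ((n:ℝ)-1) := by
        rw [← add_div, div_le_div_iff₀ (by linarith) (by linarith)]
        nlinarith [hr2]
      linarith [hq]
    calc C * (p * (1-p)⁻¹) + C * (p * (1-p)⁻¹)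
        = C * (p * (1-p)⁻¹ + p * (1-p)⁻¹) := by ring
      _ ≤ C * (r^2 / ((n:ℝ)-1)) := mul_le_mul_of_nonneg_left h2q hC0.le
  calc ∑' v : ℤ, H v
      ≤ ∑' v : ℤ, ((Set.range φp).indicator H v + (Set.range φm).indicator H v) :=
        ENNReal.tsum_le_tsum hsplit
    _ = ∑' v : ℤ, (Set.range φp).indicator H v + ∑' v : ℤ, (Set.range φm).indicator H v :=
        ENNReal.tsum_add
    _ ≤ ENNReal.ofReal (C * (p * (1-p)⁻¹)) + ENNReal.ofReal (C * (p * (1-p)⁻¹)) :=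
        add_le_add hsum1 hsum2
    _ = ENNReal.ofReal (C * (p * (1-p)⁻¹) + C * (p * (1-p)⁻¹)) := by
        rw [ENNReal.ofReal_add
          (mul_nonneg hC0.le (mul_nonneg hp0.le (inv_nonneg.mpr h1p.le)))
          (mul_nonneg hC0.le (mul_nonneg hp0.le (inv_nonneg.mpr h1p.le)))]
    _ ≤ _ := ENNReal.ofReal_le_ofReal hfinal

lemma tsum_pi_prod : ∀ {d : ℕ} (F : Fin d → ℤ → ℝ≥0∞),
    ∑' j : Fin d → ℤ, ∏ k, F k (j k) = ∏ k, ∑' m : ℤ, F k m := by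
  intro d
  induction d with
  | zero =>
    intro F
    simp only [Finset.univ_eq_empty, Finset.prod_empty]
    exact tsum_eq_single (fun i => (0:ℤ)) (fun b hb => absurd (Subsingleton.elim b _) hb) |>.trans rfl
  | succ d ih =>
    intro F
    have he := (Fin.consEquiv (fun _ : Fin (d+1) => ℤ)).tsum_eq
      (f := fun j : Fin (d+1) → ℤ => ∏ k, F k (j k))
    rw [← he]
    have hterm : ∀ q : (fun _ : Fin (d+1) => ℤ) 0 × (∀ i : Fin d, (fun _ => ℤ) i.succ),
        (∏ k, F k ((Fin.consEquiv (fun _ : Fin (d+1) => ℤ)) q k))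
          = F 0 q.1 * ∏ i : Fin d, F i.succ (q.2 i) := by
      intro q
      rw [Fin.prod_univ_succ]
      simp [Fin.consEquiv]
    rw [tsum_congr hterm,
      ENNReal.tsum_prod (f := fun a (b : ∀ i : Fin d, (fun _ => ℤ) i.succ) =>
        F 0 a * ∏ i : Fin d, F i.succ (b i))]
    have h1 : ∀ a : ℤ, ∑' b : (∀ i : Fin d, (fun _ => ℤ) i.succ), F 0 a * ∏ i : Fin d, F i.succ (b i)
        = F 0 a * ∑' b : Fin d → ℤ, ∏ i : Fin d, F i.succ (b i) := fun a => ENNReal.tsum_mul_left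
    rw [tsum_congr h1, ENNReal.tsum_mul_right, ih (fun i => F i.succ), Fin.prod_univ_succ]

lemma real_tsum_le {ι : Type*} (f : ι → ℝ) (hf : ∀ i, 0 ≤ f i) (c : ℝ) (hc : 0 ≤ c)
    (h : ∑' i, ENNReal.ofReal (f i) ≤ ENNReal.ofReal c) : ∑' i, f i ≤ c := by
  by_cases hs : Summable f
  · rw [← ENNReal.ofReal_tsum_of_nonneg hf hs] at h
    exact (ENNReal.ofReal_le_ofReal_iff hc).mp h
  · rw [tsum_eq_zero_of_not_summable hs]
    exact hc

theorem multivariate_tail_bound (d : ℕ) (hd : 1 ≤ d) (r : ℝ) (hr : 0 < r)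
    (n : ℤ) (hn : 2 ≤ n) (t : Fin d → ℝ) (ht : ∀ k, t k ∈ Set.Ioo (0 : ℝ) 1) :
    ∑' j : {j : Fin d → ℤ // ¬ ∀ k, j k ∈ Set.Ioc (-n) n},
        (sincd (fun k => t k - ((j : Fin d → ℤ) k : ℝ))) ^ 2 *
          Real.exp (-(∑ k, (t k - ((j : Fin d → ℤ) k : ℝ)) ^ 2) / r ^ 2)
      ≤ (d : ℝ) / π ^ 2 * (r ^ 2 * Real.exp (-((n : ℝ) - 1) ^ 2 / r ^ 2) /
          ((n : ℝ) ^ 2 * ((n : ℝ) - 1))) := by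
  have hpi := Real.pi_pos
  have hnR : (2:ℝ) ≤ n := by exact_mod_cast hn
  set Term : (Fin d → ℤ) → ℝ := fun j =>
    (sincd (fun k => t k - (j k : ℝ))) ^ 2 *
      Real.exp (-(∑ k, (t k - (j k : ℝ)) ^ 2) / r ^ 2) with hTerm
  have hfact : ∀ j : Fin d → ℤ,
      Term j = ∏ k, (_root_.sinc (t k - (j k : ℝ)) ^ 2 * Real.exp (-(t k - (j k : ℝ))^2 / r^2)) := by
    intro j
    rw [hTerm]
    simp only [sincd]
    rw [Finset.prod_mul_distrib, ← Finset.prod_pow]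
    congr 1
    rw [← Real.exp_sum]
    congr 1
    rw [← Finset.sum_div, ← Finset.sum_neg_distrib]
  have hTnonneg : ∀ j, 0 ≤ Term j := by
    intro j
    rw [hfact]
    apply Finset.prod_nonneg
    intro k _
    positivity
  set RHS : ℝ := (d : ℝ) / π ^ 2 * (r ^ 2 * Real.exp (-((n : ℝ) - 1) ^ 2 / r ^ 2) /
    ((n : ℝ) ^ 2 * ((n : ℝ) - 1))) with hRHS
  have hRHS0 : 0 ≤ RHS := by
    rw [hRHS]
    have h1 : (0:ℝ) < (n:ℝ) - 1 := by linarith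
    have h2 : (0:ℝ) < (n:ℝ) := by linarith
    positivity
  set G : Fin d → ℤ → ℝ≥0∞ := fun k v =>
    ENNReal.ofReal (_root_.sinc (t k - v) ^ 2 * Real.exp (-(t k - v)^2 / r^2)) with hG
  set T : ℝ≥0∞ := ENNReal.ofReal (r^2 * Real.exp (-((n:ℝ)-1)^2/r^2)
    / (π^2 * (n:ℝ)^2 * ((n:ℝ)-1))) with hT
  -- ENNReal bound
  have hmain : ∑' j : {j : Fin d → ℤ // ¬ ∀ k, j k ∈ Set.Ioc (-n) n},
      ENNReal.ofReal (Term (j : Fin d → ℤ)) ≤ ENNReal.ofReal RHS := by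
    have hofG : ∀ j : Fin d → ℤ, ENNReal.ofReal (Term j) = ∏ k, G k (j k) := by
      intro j
      rw [hfact, ENNReal.ofReal_prod_of_nonneg (fun k _ => by positivity)]
    set S : Set (Fin d → ℤ) := {j | ¬ ∀ k, j k ∈ Set.Ioc (-n) n} with hS
    have hsub : ∑' j : {j : Fin d → ℤ // ¬ ∀ k, j k ∈ Set.Ioc (-n) n},
        ENNReal.ofReal (Term (j : Fin d → ℤ))
        = ∑' j : Fin d → ℤ, S.indicator (fun j => ∏ k, G k (j k)) j := by
      rw [← tsum_subtype S (fun j => ∏ k, G k (j k))]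
      exact tsum_congr (fun j => hofG j)
    rw [hsub]
    set Fk : Fin d → Fin d → ℤ → ℝ≥0∞ := fun k m =>
      if m = k then (Set.Ioc (-n) n)ᶜ.indicator (G m) else G m with hFk
    have hpoint : ∀ j : Fin d → ℤ, S.indicator (fun j => ∏ k, G k (j k)) j
        ≤ ∑ k, ∏ m, Fk k m (j m) := by
      intro j
      by_cases hj : j ∈ S
      · rw [Set.indicator_of_mem hj]
        rw [hS, Set.mem_setOf_eq] at hj
        push_neg at hj
        obtain ⟨k, hk⟩ := hj
        have heq : ∏ m, Fk k m (j m) = ∏ m, G m (j m) := by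
          apply Finset.prod_congr rfl
          intro m _
          by_cases hm : m = k
          · subst hm
            simp only [hFk]
            rw [if_true]
            exact Set.indicator_of_mem (Set.mem_compl hk) (G m)
          · simp only [hFk]
            rw [if_neg hm]
        rw [← heq]
        exact Finset.single_le_sum (f := fun k => ∏ m, Fk k m (j m))
          (fun k _ => zero_le) (Finset.mem_univ k)
      · rw [Set.indicator_of_notMem hj]
        exact zero_le
    calc ∑' j : Fin d → ℤ, S.indicator (fun j => ∏ k, G k (j k)) j
        ≤ ∑' j : Fin d → ℤ, ∑ k, ∏ m, Fk k m (j m) := ENNReal.tsum_le_tsum hpoint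
      _ = ∑ k, ∑' j : Fin d → ℤ, ∏ m, Fk k m (j m) :=
          Summable.tsum_finsetSum (fun k _ => ENNReal.summable)
      _ = ∑ k, ∏ m, ∑' v : ℤ, Fk k m v := by
          exact Finset.sum_congr rfl (fun k _ => tsum_pi_prod (Fk k))
      _ ≤ ∑ k : Fin d, T := by
          apply Finset.sum_le_sum
          intro k _
          calc ∏ m, ∑' v : ℤ, Fk k m v
              ≤ ∏ m, (if m = k then T else 1) := by
                apply Finset.prod_le_prod'
                intro m _
                by_cases hm : m = k
                · subst hm
                  simp only [hFk]
                  rw [if_true, if_true]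
                  exact tail_sum_le r hr n hn (t m) (ht m).1 (ht m).2
                · simp only [hFk]
                  rw [if_neg hm, if_neg hm]
                  exact full_sum_le_one r (t m) (ht m).1 (ht m).2
            _ = T := by simp
      _ = (d : ℝ≥0∞) * T := by
          rw [Finset.sum_const, Finset.card_univ, Fintype.card_fin, nsmul_eq_mul]
      _ ≤ ENNReal.ofReal RHS := by
          rw [hT, ← ENNReal.ofReal_natCast d, ← ENNReal.ofReal_mul (by positivity)]
          apply ENNReal.ofReal_le_ofReal
          rw [hRHS]
          have h1 : (0:ℝ) < (n:ℝ) - 1 := by linarith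
          have h2 : (0:ℝ) < (n:ℝ) := by linarith
          apply le_of_eq
          have hne1 : ((n:ℝ) - 1) ≠ 0 := by linarith
          have hne2 : ((n:ℝ)) ≠ 0 := by linarith
          field_simp
  exact real_tsum_le (fun j : {j : Fin d → ℤ // ¬ ∀ k, j k ∈ Set.Ioc (-n) n} => Term (j : Fin d → ℤ))
    (fun j => hTnonneg _) RHS hRHS0 hmain
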